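/- arXiv:2111.00839 — 9 statements merged into one kernel-verified Lean document; each statement's English description precedes it below -/
import Mathlib

section
/- Let d, f, g, h be real numbers with d ≥ 1, f > 0, g > 0 and h > 0, let T(σ) = d²σ + f² − d²g²σ²/(g²σ + h²), and let σ* = (√(h²(h²(d²−1)² + 2f²g²(d²+1)) + f⁴g⁴) + h²(d²−1) + f²g²)/(2g²). Then for every initial value σ₀ ≥ 0 the recursively defined sequence σ_{n+1} = T(σ_n) converges to σ* as n → ∞. -/
open Filter

/-- The Riccati map. -/
noncomputable def riccatiMap (d f g h x : ℝ) : ℝ :=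
  d ^ 2 * x + f ^ 2 - d ^ 2 * g ^ 2 * x ^ 2 / (g ^ 2 * x + h ^ 2)

/-- For every initial value `σ₀ ≥ 0`, the Riccati recursion `σ_{n+1} = T(σ_n)` with
`T(σ) = d²σ + f² − d²g²σ²/(g²σ + h²)` converges to the steady-state variance `σ*`. -/
theorem riccati_recursion_converges (d f g h : ℝ)
    (hd : 1 ≤ d) (hf : 0 < f) (hg : 0 < g) (hh : 0 < h)
    (σstar : ℝ)
    (hσ : σstar = (Real.sqrt (h ^ 2 * (h ^ 2 * (d ^ 2 - 1) ^ 2 + 2 * f ^ 2 * g ^ 2 * (d ^ 2 + 1))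
        + f ^ 4 * g ^ 4) + h ^ 2 * (d ^ 2 - 1) + f ^ 2 * g ^ 2) / (2 * g ^ 2)) :
    ∀ σ₀ : ℝ, 0 ≤ σ₀ → ∀ s : ℕ → ℝ, s 0 = σ₀ →
      (∀ n : ℕ, s (n + 1) =
        d ^ 2 * s n + f ^ 2 - d ^ 2 * g ^ 2 * (s n) ^ 2 / (g ^ 2 * s n + h ^ 2)) →
      Tendsto s atTop (nhds σstar) := by
  intro σ₀ hσ₀ s hs0 hrec
  set F : ℝ → ℝ := riccatiMap d f g h with hFdef
  have hrecF : ∀ n, s (n + 1) = F (s n) := fun n => by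
    rw [hrec n]; rfl
  have hd2 : 1 ≤ d ^ 2 := by nlinarith
  -- abbreviations
  set b : ℝ := h ^ 2 * (d ^ 2 - 1) + f ^ 2 * g ^ 2 with hb_def
  have hb : 0 < b := by
    have h1 : 0 ≤ h ^ 2 * (d ^ 2 - 1) := mul_nonneg (sq_nonneg h) (by linarith)
    have h2 : 0 < f ^ 2 * g ^ 2 := by positivity
    linarith
  set A : ℝ := h ^ 2 * (h ^ 2 * (d ^ 2 - 1) ^ 2 + 2 * f ^ 2 * g ^ 2 * (d ^ 2 + 1))
      + f ^ 4 * g ^ 4 with hA_def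
  have hA : A = b ^ 2 + 4 * g ^ 2 * f ^ 2 * h ^ 2 := by rw [hA_def, hb_def]; ring
  have hAnn : 0 ≤ A := by
    rw [hA]; positivity
  set S : ℝ := Real.sqrt A with hS_def
  have hS : S ^ 2 = A := Real.sq_sqrt hAnn
  have hSnn : 0 ≤ S := Real.sqrt_nonneg _
  have hS2 : S ^ 2 = b ^ 2 + 4 * g ^ 2 * f ^ 2 * h ^ 2 := by rw [hS, hA]
  have hSb : b < S := by
    have hpos : 0 < 4 * g ^ 2 * f ^ 2 * h ^ 2 := by positivity
    nlinarith [hS2, hpos, hSnn, hb]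
  have hσ' : σstar = (S + b) / (2 * g ^ 2) := by rw [hσ, hb_def]; ring
  have hσpos : 0 < σstar := by
    rw [hσ']; positivity
  have h2gσ : 2 * g ^ 2 * σstar = S + b := by
    rw [hσ']; field_simp
  have hquad : g ^ 2 * σstar ^ 2 = b * σstar + f ^ 2 * h ^ 2 := by
    have hS2' : S = 2 * g ^ 2 * σstar - b := by linarith
    have hsq : (2 * g ^ 2 * σstar - b) ^ 2 = b ^ 2 + 4 * g ^ 2 * f ^ 2 * h ^ 2 := by
      rw [← hS2', hS2]
    have h4 : (4 * g ^ 2) * (g ^ 2 * σstar ^ 2) = (4 * g ^ 2) * (b * σstar + f ^ 2 * h ^ 2) := by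
      linear_combination hsq
    exact mul_left_cancel₀ (by positivity : (4 * g ^ 2 : ℝ) ≠ 0) h4
  have hstar_gt : b < g ^ 2 * σstar := by linarith
  -- denominator positivity
  have hD : ∀ x : ℝ, 0 ≤ x → 0 < g ^ 2 * x + h ^ 2 := by
    intro x hx
    have h1 : 0 ≤ g ^ 2 * x := by positivity
    nlinarith [sq_nonneg h]
  -- alternate form of F
  have hFalt : ∀ x : ℝ, 0 ≤ x →
      F x = f ^ 2 + d ^ 2 * h ^ 2 * x / (g ^ 2 * x + h ^ 2) := by
    intro x hx
    have hDx := hD x hx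
    rw [hFdef]; unfold riccatiMap
    field_simp
    ring
  -- monotonicity
  have hmono : ∀ x y : ℝ, 0 ≤ x → x ≤ y → F x ≤ F y := by
    intro x y hx hxy
    have hy : 0 ≤ y := hx.trans hxy
    have hDx := hD x hx
    have hDy := hD y hy
    rw [hFalt x hx, hFalt y hy]
    have h1 : d ^ 2 * h ^ 2 * x / (g ^ 2 * x + h ^ 2)
        ≤ d ^ 2 * h ^ 2 * y / (g ^ 2 * y + h ^ 2) := by
      rw [div_le_div_iff₀ hDx hDy]
      have e : d ^ 2 * h ^ 2 * y * (g ^ 2 * x + h ^ 2) - d ^ 2 * h ^ 2 * x * (g ^ 2 * y + h ^ 2)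
          = d ^ 2 * h ^ 2 * h ^ 2 * (y - x) := by ring
      have hnn : 0 ≤ d ^ 2 * h ^ 2 * h ^ 2 * (y - x) :=
        mul_nonneg (by positivity) (sub_nonneg.2 hxy)
      linarith
    linarith
  -- fixed point
  have hfix : F σstar = σstar := by
    have hDs := hD σstar hσpos.le
    rw [hFalt σstar hσpos.le]
    field_simp
    linear_combination -hquad - σstar * hb_def
  -- sign of F x - x
  have hdiff : ∀ x : ℝ, 0 ≤ x →
      F x - x = (b * x + f ^ 2 * h ^ 2 - g ^ 2 * x ^ 2) / (g ^ 2 * x + h ^ 2) := by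
    intro x hx
    have hDx := hD x hx
    rw [hFalt x hx, hb_def]
    field_simp
    ring
  have hfac : ∀ x : ℝ,
      b * x + f ^ 2 * h ^ 2 - g ^ 2 * x ^ 2
        = (σstar - x) * (g ^ 2 * (x + σstar) - b) := by
    intro x
    linear_combination -hquad
  have hsign_le : ∀ x : ℝ, 0 ≤ x → x ≤ σstar → x ≤ F x := by
    intro x hx hxs
    have hDx := hD x hx
    have hnum : 0 ≤ b * x + f ^ 2 * h ^ 2 - g ^ 2 * x ^ 2 := by
      rw [hfac x]
      apply mul_nonneg (by linarith)
      have h1 : 0 ≤ g ^ 2 * x := by positivity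
      have e : g ^ 2 * (x + σstar) - b = g ^ 2 * x + (g ^ 2 * σstar - b) := by ring
      linarith
    have := div_nonneg hnum hDx.le
    rw [← hdiff x hx] at this
    linarith
  have hsign_ge : ∀ x : ℝ, σstar ≤ x → F x ≤ x := by
    intro x hxs
    have hx : 0 ≤ x := hσpos.le.trans hxs
    have hDx := hD x hx
    have hnum : b * x + f ^ 2 * h ^ 2 - g ^ 2 * x ^ 2 ≤ 0 := by
      rw [hfac x]
      apply mul_nonpos_of_nonpos_of_nonneg (by linarith)
      have h1 : 0 ≤ g ^ 2 * x := by positivity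
      have e : g ^ 2 * (x + σstar) - b = g ^ 2 * x + (g ^ 2 * σstar - b) := by ring
      linarith
    have := div_nonpos_of_nonpos_of_nonneg hnum hDx.le
    rw [← hdiff x hx] at this
    linarith
  -- uniqueness of the nonnegative fixed point
  have huniq : ∀ L : ℝ, 0 ≤ L → F L = L → L = σstar := by
    intro L hL hfixL
    have hDL := hD L hL
    have hnum : b * L + f ^ 2 * h ^ 2 - g ^ 2 * L ^ 2 = 0 := by
      have h0 : F L - L = 0 := by rw [hfixL]; ring
      rw [hdiff L hL] at h0
      exact (div_eq_zero_iff.mp h0).resolve_right hDL.ne'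
    rw [hfac L] at hnum
    have hpos : 0 < g ^ 2 * (L + σstar) - b := by
      have h1 : 0 ≤ g ^ 2 * L := by positivity
      have e : g ^ 2 * (L + σstar) - b = g ^ 2 * L + (g ^ 2 * σstar - b) := by ring
      linarith
    rcases mul_eq_zero.mp hnum with h1 | h1
    · linarith [sub_eq_zero.mp h1]
    · exact absurd h1 hpos.ne'
  -- continuity of F at points with positive denominator
  have hcont : ∀ L : ℝ, 0 ≤ L → ContinuousAt F L := by
    intro L hL
    have hDL := hD L hL
    rw [hFdef]
    unfold riccatiMap
    apply ContinuousAt.sub (by fun_prop)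
    exact ContinuousAt.div (by fun_prop) (by fun_prop) hDL.ne'
  -- the limit of the sequence is a fixed point
  have hlimfix : ∀ L : ℝ, 0 ≤ L → Tendsto s atTop (nhds L) → Tendsto s atTop (nhds σstar) := by
    intro L hL hconv
    have h1 : Tendsto (fun n => s (n + 1)) atTop (nhds L) :=
      hconv.comp (tendsto_add_atTop_nat 1)
    have h2 : Tendsto (fun n => F (s n)) atTop (nhds (F L)) :=
      ((hcont L hL).tendsto).comp hconv
    have h3 : (fun n => s (n + 1)) = fun n => F (s n) := funext hrecF
    rw [h3] at h1
    have hFL : F L = L := tendsto_nhds_unique h2 h1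
    rwa [huniq L hL hFL] at hconv
  -- invariants
  rcases le_total σ₀ σstar with hcase | hcase
  · -- increasing case
    have hinv : ∀ n, 0 ≤ s n ∧ s n ≤ σstar := by
      intro n
      induction n with
      | zero => rw [hs0]; exact ⟨hσ₀, hcase⟩
      | succ n ih =>
        rw [hrecF n]
        refine ⟨ih.1.trans (hsign_le _ ih.1 ih.2), ?_⟩
        have := hmono (s n) σstar ih.1 ih.2
        rwa [hfix] at this
    have hmono_s : Monotone s := monotone_nat_of_le_succ (fun n => by
      rw [hrecF n]; exact hsign_le _ (hinv n).1 (hinv n).2)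
    have hbdd : BddAbove (Set.range s) := ⟨σstar, by rintro _ ⟨n, rfl⟩; exact (hinv n).2⟩
    have hconv := tendsto_atTop_ciSup hmono_s hbdd
    have hL0 : 0 ≤ ⨆ n, s n := (hinv 0).1.trans (le_ciSup hbdd 0)
    exact hlimfix _ hL0 hconv
  · -- decreasing case
    have hinv : ∀ n, σstar ≤ s n := by
      intro n
      induction n with
      | zero => rw [hs0]; exact hcase
      | succ n ih =>
        rw [hrecF n]
        have := hmono σstar (s n) hσpos.le ih
        rwa [hfix] at this
    have hanti_s : Antitone s := antitone_nat_of_succ_le (fun n => by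
      rw [hrecF n]; exact hsign_ge _ (hinv n))
    have hbdd : BddBelow (Set.range s) := ⟨σstar, by rintro _ ⟨n, rfl⟩; exact hinv n⟩
    have hconv := tendsto_atTop_ciInf hanti_s hbdd
    have hL0 : 0 ≤ ⨅ n, s n := le_ciInf (fun n => hσpos.le.trans (hinv n))
    exact hlimfix _ hL0 hconv
end

section
/- Let d, f, g be real numbers with d ≥ 1, f > 0, g > 0, and define σ*(h) = (√(h²(h²(d²−1)² + 2f²g²(d²+1)) + f⁴g⁴) + h²(d²−1) + f²g²)/(2g²). Then σ* is strictly increasing in the signal noise: for all 0 ≤ h₁ < h₂ one has σ*(h₁) < σ*(h₂). In particular σ*(h) attains its global minimum f² at h = 0. -/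
/-- The steady-state variance `σ*(h)` is strictly increasing in the signal noise `h ≥ 0`,
and attains its global minimum `f²` at `h = 0`. -/
theorem steady_state_variance_strict_mono_in_noise (d f g : ℝ)
    (hd : 1 ≤ d) (hf : 0 < f) (hg : 0 < g)
    (σstar : ℝ → ℝ)
    (hσ : ∀ h : ℝ, σstar h =
      (Real.sqrt (h ^ 2 * (h ^ 2 * (d ^ 2 - 1) ^ 2 + 2 * f ^ 2 * g ^ 2 * (d ^ 2 + 1))
        + f ^ 4 * g ^ 4) + h ^ 2 * (d ^ 2 - 1) + f ^ 2 * g ^ 2) / (2 * g ^ 2)) :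
    (∀ h₁ h₂ : ℝ, 0 ≤ h₁ → h₁ < h₂ → σstar h₁ < σstar h₂) ∧
      σstar 0 = f ^ 2 ∧ ∀ h : ℝ, 0 ≤ h → f ^ 2 ≤ σstar h := by
  have hd2 : (0:ℝ) ≤ d ^ 2 - 1 := by nlinarith
  have key : ∀ h₁ h₂ : ℝ, 0 ≤ h₁ → h₁ < h₂ → σstar h₁ < σstar h₂ := by
    intro h₁ h₂ h1 h12
    rw [hσ, hσ]
    have hsq : h₁ ^ 2 < h₂ ^ 2 := by nlinarith
    have hA1 : (0:ℝ) ≤ h₁ ^ 2 * (h₁ ^ 2 * (d ^ 2 - 1) ^ 2 + 2 * f ^ 2 * g ^ 2 * (d ^ 2 + 1))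
        + f ^ 4 * g ^ 4 := by positivity
    have hAlt : h₁ ^ 2 * (h₁ ^ 2 * (d ^ 2 - 1) ^ 2 + 2 * f ^ 2 * g ^ 2 * (d ^ 2 + 1))
        + f ^ 4 * g ^ 4 <
        h₂ ^ 2 * (h₂ ^ 2 * (d ^ 2 - 1) ^ 2 + 2 * f ^ 2 * g ^ 2 * (d ^ 2 + 1))
        + f ^ 4 * g ^ 4 := by
      have t1 : h₁ ^ 2 * h₁ ^ 2 ≤ h₂ ^ 2 * h₂ ^ 2 :=
        mul_le_mul hsq.le hsq.le (sq_nonneg h₁) (sq_nonneg h₂)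
      have t2 : h₁ ^ 2 * h₁ ^ 2 * (d ^ 2 - 1) ^ 2 ≤ h₂ ^ 2 * h₂ ^ 2 * (d ^ 2 - 1) ^ 2 :=
        mul_le_mul_of_nonneg_right t1 (sq_nonneg _)
      have t3 : h₁ ^ 2 * (2 * f ^ 2 * g ^ 2 * (d ^ 2 + 1)) <
          h₂ ^ 2 * (2 * f ^ 2 * g ^ 2 * (d ^ 2 + 1)) :=
        mul_lt_mul_of_pos_right hsq (by positivity)
      nlinarith [t2, t3]
    have hs := Real.sqrt_lt_sqrt hA1 hAlt
    have hmul : h₁ ^ 2 * (d ^ 2 - 1) ≤ h₂ ^ 2 * (d ^ 2 - 1) := by nlinarith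
    have hnum : Real.sqrt (h₁ ^ 2 * (h₁ ^ 2 * (d ^ 2 - 1) ^ 2 + 2 * f ^ 2 * g ^ 2 * (d ^ 2 + 1))
        + f ^ 4 * g ^ 4) + h₁ ^ 2 * (d ^ 2 - 1) + f ^ 2 * g ^ 2 <
        Real.sqrt (h₂ ^ 2 * (h₂ ^ 2 * (d ^ 2 - 1) ^ 2 + 2 * f ^ 2 * g ^ 2 * (d ^ 2 + 1))
        + f ^ 4 * g ^ 4) + h₂ ^ 2 * (d ^ 2 - 1) + f ^ 2 * g ^ 2 := by linarith
    have hden : (0:ℝ) < 2 * g ^ 2 := by positivity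
    exact div_lt_div_of_pos_right hnum hden
  have h0 : σstar 0 = f ^ 2 := by
    rw [hσ]
    have hfg : f ^ 4 * g ^ 4 = (f ^ 2 * g ^ 2) ^ 2 := by ring
    rw [show ((0:ℝ) ^ 2 * (0 ^ 2 * (d ^ 2 - 1) ^ 2 + 2 * f ^ 2 * g ^ 2 * (d ^ 2 + 1))
        + f ^ 4 * g ^ 4) = (f ^ 2 * g ^ 2) ^ 2 by ring,
      Real.sqrt_sq (by positivity)]
    field_simp
    ring
  refine ⟨key, h0, ?_⟩
  intro h hh
  rcases eq_or_lt_of_le hh with rfl | hpos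
  · exact h0.ge
  · exact h0 ▸ (key 0 h le_rfl hpos).le
end

section
/- Let d, f, g be real numbers with d ≥ 1, f > 0, g > 0, define σ*(h) = (√(h²(h²(d²−1)² + 2f²g²(d²+1)) + f⁴g⁴) + h²(d²−1) + f²g²)/(2g²) and the steady-state Kalman gain K(h) = d g σ*(h)/(g²σ*(h) + h²). Then K(0) = d/g and K(h) ≤ d/g for every real h, i.e., the Kalman gain attains its global maximum at zero signal noise h = 0. -/
/-- The steady-state Kalman gain `K(h) = dgσ*(h)/(g²σ*(h) + h²)` attains its global maximum
`d/g` at zero signal noise `h = 0`. -/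
theorem kalman_gain_max_at_zero_noise (d f g : ℝ)
    (hd : 1 ≤ d) (hf : 0 < f) (hg : 0 < g)
    (σstar K : ℝ → ℝ)
    (hσ : ∀ h : ℝ, σstar h =
      (Real.sqrt (h ^ 2 * (h ^ 2 * (d ^ 2 - 1) ^ 2 + 2 * f ^ 2 * g ^ 2 * (d ^ 2 + 1))
        + f ^ 4 * g ^ 4) + h ^ 2 * (d ^ 2 - 1) + f ^ 2 * g ^ 2) / (2 * g ^ 2))
    (hK : ∀ h : ℝ, K h = d * g * σstar h / (g ^ 2 * σstar h + h ^ 2)) :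
    K 0 = d / g ∧ ∀ h : ℝ, K h ≤ d / g := by
  have hd0 : (0:ℝ) < d := lt_of_lt_of_le one_pos hd
  have hσpos : ∀ h : ℝ, 0 < σstar h := by
    intro h
    rw [hσ h]
    apply div_pos _ (by positivity)
    have h1 : 0 ≤ Real.sqrt (h ^ 2 * (h ^ 2 * (d ^ 2 - 1) ^ 2 + 2 * f ^ 2 * g ^ 2 * (d ^ 2 + 1))
        + f ^ 4 * g ^ 4) := Real.sqrt_nonneg _
    have h2 : 0 ≤ h ^ 2 * (d ^ 2 - 1) := by
      apply mul_nonneg (sq_nonneg h)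
      nlinarith
    positivity
  constructor
  · have h0 : σstar 0 = f ^ 2 := by
      rw [hσ 0]
      have : Real.sqrt ((0:ℝ) ^ 2 * ((0:ℝ) ^ 2 * (d ^ 2 - 1) ^ 2 + 2 * f ^ 2 * g ^ 2 * (d ^ 2 + 1))
          + f ^ 4 * g ^ 4) = f ^ 2 * g ^ 2 := by
        rw [show (0:ℝ) ^ 2 * ((0:ℝ) ^ 2 * (d ^ 2 - 1) ^ 2 + 2 * f ^ 2 * g ^ 2 * (d ^ 2 + 1))
          + f ^ 4 * g ^ 4 = (f ^ 2 * g ^ 2) ^ 2 by ring]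
        exact Real.sqrt_sq (by positivity)
      rw [this]
      field_simp
      ring
    rw [hK 0, h0]
    field_simp
    ring
  · intro h
    rw [hK h]
    have hσp := hσpos h
    have hden : 0 < g ^ 2 * σstar h := by positivity
    calc d * g * σstar h / (g ^ 2 * σstar h + h ^ 2)
        ≤ d * g * σstar h / (g ^ 2 * σstar h) := by
          apply div_le_div_of_nonneg_left (by positivity) hden
          nlinarith [sq_nonneg h]
      _ = d / g := by field_simp
end

section
/- Let d, f, g be real numbers with d > 1, f > 0, g > 0, define σ*(h) = (√(h²(h²(d²−1)² + 2f²g²(d²+1)) + f⁴g⁴) + h²(d²−1) + f²g²)/(2g²) and K(h) = d g σ*(h)/(g²σ*(h) + h²). Then the steady-state Kalman gain converges to a positive constant as the signal noise grows: lim_{h→∞} K(h) = (d²−1)/(d g). -/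
open Filter

/-- As the signal noise grows, the steady-state Kalman gain converges to the positive
constant `(d² − 1)/(dg)`. -/
theorem kalman_gain_limit_large_noise (d f g : ℝ)
    (hd : 1 < d) (hf : 0 < f) (hg : 0 < g)
    (σstar K : ℝ → ℝ)
    (hσ : ∀ h : ℝ, σstar h =
      (Real.sqrt (h ^ 2 * (h ^ 2 * (d ^ 2 - 1) ^ 2 + 2 * f ^ 2 * g ^ 2 * (d ^ 2 + 1))
        + f ^ 4 * g ^ 4) + h ^ 2 * (d ^ 2 - 1) + f ^ 2 * g ^ 2) / (2 * g ^ 2))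
    (hK : ∀ h : ℝ, K h = d * g * σstar h / (g ^ 2 * σstar h + h ^ 2)) :
    Tendsto K atTop (nhds ((d ^ 2 - 1) / (d * g))) := by
  set F : ℝ → ℝ := fun t =>
    (Real.sqrt ((d ^ 2 - 1) ^ 2 + 2 * f ^ 2 * g ^ 2 * (d ^ 2 + 1) * t + f ^ 4 * g ^ 4 * t ^ 2)
      + (d ^ 2 - 1) + f ^ 2 * g ^ 2 * t) / (2 * g ^ 2) with hF
  have hd2 : (0:ℝ) < d ^ 2 - 1 := by nlinarith
  have hg2 : (g:ℝ) ^ 2 ≠ 0 := pow_ne_zero 2 hg.ne'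
  have hF0 : F 0 = (d ^ 2 - 1) / g ^ 2 := by
    simp only [hF, mul_zero, add_zero, zero_pow, ne_eq, OfNat.ofNat_ne_zero,
      not_false_eq_true]
    rw [Real.sqrt_sq hd2.le]
    field_simp
    ring
  have hFcont : Continuous F := by
    apply Continuous.div_const
    apply Continuous.add
    apply Continuous.add
    · exact Real.continuous_sqrt.comp (by continuity)
    · exact continuous_const
    · continuity
  have hinv : Tendsto (fun h : ℝ => 1 / h ^ 2) atTop (nhds 0) := by
    have h1 : Tendsto (fun h : ℝ => h ^ 2) atTop atTop := tendsto_pow_atTop two_ne_zero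
    simp only [one_div]; exact h1.inv_tendsto_atTop
  have hFlim : Tendsto (fun h : ℝ => F (1 / h ^ 2)) atTop (nhds (F 0)) :=
    (hFcont.tendsto 0).comp hinv
  have hden0 : g ^ 2 * F 0 + 1 = d ^ 2 := by
    rw [hF0]; field_simp; ring
  have hval : (d ^ 2 - 1) / (d * g) = d * g * F 0 / (g ^ 2 * F 0 + 1) := by
    have hd0 : d ≠ 0 := by nlinarith
    rw [hF0]
    rw [show g ^ 2 * ((d ^ 2 - 1) / g ^ 2) + 1 = d ^ 2 from by field_simp; ring]
    field_simp
  have hmain : Tendsto (fun h : ℝ => d * g * F (1 / h ^ 2) / (g ^ 2 * F (1 / h ^ 2) + 1))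
      atTop (nhds (d * g * F 0 / (g ^ 2 * F 0 + 1))) := by
    apply Tendsto.div
    · exact (tendsto_const_nhds.mul hFlim)
    · exact ((tendsto_const_nhds.mul hFlim).add tendsto_const_nhds)
    · rw [hden0]; positivity
  rw [hval]
  apply hmain.congr'
  filter_upwards [eventually_gt_atTop (0:ℝ)] with h hh
  have hh2 : (h:ℝ) ^ 2 ≠ 0 := pow_ne_zero 2 hh.ne'
  have hs : h ^ 2 * (h ^ 2 * (d ^ 2 - 1) ^ 2 + 2 * f ^ 2 * g ^ 2 * (d ^ 2 + 1)) + f ^ 4 * g ^ 4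
      = (h ^ 2) ^ 2 * ((d ^ 2 - 1) ^ 2 + 2 * f ^ 2 * g ^ 2 * (d ^ 2 + 1) * (1 / h ^ 2)
        + f ^ 4 * g ^ 4 * (1 / h ^ 2) ^ 2) := by
    field_simp
  have hσh : σstar h = h ^ 2 * F (1 / h ^ 2) := by
    rw [hσ, hF]
    simp only
    rw [hs, Real.sqrt_mul (sq_nonneg _), Real.sqrt_sq (sq_nonneg h)]
    field_simp
  rw [hK, hσh,
    show d * g * (h ^ 2 * F (1 / h ^ 2)) = d * g * F (1 / h ^ 2) * h ^ 2 from by ring,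
    show g ^ 2 * (h ^ 2 * F (1 / h ^ 2)) + h ^ 2 = (g ^ 2 * F (1 / h ^ 2) + 1) * h ^ 2 from by
      ring,
    mul_div_mul_right _ _ hh2]
end

section
/- Let d, f, g be real numbers with d > 1, f > 0, g > 0, define σ*(h) = (√(h²(h²(d²−1)² + 2f²g²(d²+1)) + f⁴g⁴) + h²(d²−1) + f²g²)/(2g²) and K(h) = d g σ*(h)/(g²σ*(h) + h²). Then the pro-rata Value of Information K(h)·σ*(h) has a strict global minimum at zero signal noise: K(0)·σ*(0) = d f²/g and K(h)·σ*(h) > d f²/g for every h ≠ 0. -/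
/-- The pro-rata Value of Information `K(h)·σ*(h)` has a strict global minimum `d f²/g`
at zero signal noise `h = 0`. -/
theorem pro_rata_voi_strict_min_at_zero_noise (d f g : ℝ)
    (hd : 1 < d) (hf : 0 < f) (hg : 0 < g)
    (σstar K : ℝ → ℝ)
    (hσ : ∀ h : ℝ, σstar h =
      (Real.sqrt (h ^ 2 * (h ^ 2 * (d ^ 2 - 1) ^ 2 + 2 * f ^ 2 * g ^ 2 * (d ^ 2 + 1))
        + f ^ 4 * g ^ 4) + h ^ 2 * (d ^ 2 - 1) + f ^ 2 * g ^ 2) / (2 * g ^ 2))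
    (hK : ∀ h : ℝ, K h = d * g * σstar h / (g ^ 2 * σstar h + h ^ 2)) :
    K 0 * σstar 0 = d * f ^ 2 / g ∧
      ∀ h : ℝ, h ≠ 0 → d * f ^ 2 / g < K h * σstar h := by
  have hd2 : (0:ℝ) ≤ d ^ 2 - 1 := by nlinarith
  -- key facts for any h
  have key : ∀ h : ℝ, 0 < σstar h ∧
      g ^ 2 * σstar h ^ 2 = (h ^ 2 * (d ^ 2 - 1) + f ^ 2 * g ^ 2) * σstar h + f ^ 2 * h ^ 2 := by
    intro h
    set Δ := h ^ 2 * (h ^ 2 * (d ^ 2 - 1) ^ 2 + 2 * f ^ 2 * g ^ 2 * (d ^ 2 + 1))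
        + f ^ 4 * g ^ 4 with hΔ
    have hΔ0 : 0 ≤ Δ := by positivity
    have hsq : Real.sqrt Δ ^ 2 = Δ := Real.sq_sqrt hΔ0
    have hsn : 0 ≤ Real.sqrt Δ := Real.sqrt_nonneg Δ
    have hs : σstar h = (Real.sqrt Δ + h ^ 2 * (d ^ 2 - 1) + f ^ 2 * g ^ 2) / (2 * g ^ 2) :=
      hσ h
    have hg2 : (0:ℝ) < 2 * g ^ 2 := by positivity
    constructor
    · rw [hs]
      apply div_pos _ hg2
      have h1 : 0 ≤ h ^ 2 * (d ^ 2 - 1) := mul_nonneg (sq_nonneg h) hd2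
      have h2 : 0 < f ^ 2 * g ^ 2 := by positivity
      linarith
    · have hlin : 2 * g ^ 2 * σstar h - (h ^ 2 * (d ^ 2 - 1) + f ^ 2 * g ^ 2) = Real.sqrt Δ := by
        rw [hs]; field_simp; ring
      have h2 : (2 * g ^ 2 * σstar h - (h ^ 2 * (d ^ 2 - 1) + f ^ 2 * g ^ 2)) ^ 2 = Δ := by
        rw [hlin]; exact hsq
      nlinarith [h2]
  constructor
  · obtain ⟨hpos, hquad⟩ := key 0
    have h0 : σstar 0 = f ^ 2 := by
      have e : g ^ 2 * σstar 0 * (σstar 0 - f ^ 2) = 0 := by linear_combination hquad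
      rcases mul_eq_zero.1 e with e1 | e2
      · exact absurd e1 (by positivity)
      · linarith
    rw [hK 0, h0]
    field_simp
    ring
  · intro h hh
    obtain ⟨hpos, hquad⟩ := key h
    have hh2 : 0 < h ^ 2 := by positivity
    have hden : 0 < g ^ 2 * σstar h + h ^ 2 := by positivity
    rw [hK h]
    rw [div_mul_eq_mul_div, div_lt_div_iff₀ hg hden]
    have hd2' : (0:ℝ) < d ^ 2 - 1 := by nlinarith
    have hd0 : (0:ℝ) < d := by linarith
    have hq2 : d * (g ^ 2 * σstar h ^ 2)
        = d * ((h ^ 2 * (d ^ 2 - 1) + f ^ 2 * g ^ 2) * σstar h + f ^ 2 * h ^ 2) := by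
      rw [hquad]
    nlinarith [hq2, mul_pos (mul_pos hd0 hd2') (mul_pos hh2 hpos)]
end

section
/- Let d, f, g be real numbers with d > 1, f > 0, g > 0, define σ*(h) = (√(h²(h²(d²−1)² + 2f²g²(d²+1)) + f⁴g⁴) + h²(d²−1) + f²g²)/(2g²), K(h) = d g σ*(h)/(g²σ*(h) + h²), and VoI(h) = K(h)²·σ*(h). Then the Value of Information diverges as the signal noise grows: VoI(h) → ∞ as h → ∞. -/
open Filter

/-- With market growth `d > 1`, the Value of Information `VoI(h) = K(h)²σ*(h)` diverges
to infinity as the signal noise `h` grows. -/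
theorem voi_diverges_large_noise (d f g : ℝ)
    (hd : 1 < d) (hf : 0 < f) (hg : 0 < g)
    (σstar K VoI : ℝ → ℝ)
    (hσ : ∀ h : ℝ, σstar h =
      (Real.sqrt (h ^ 2 * (h ^ 2 * (d ^ 2 - 1) ^ 2 + 2 * f ^ 2 * g ^ 2 * (d ^ 2 + 1))
        + f ^ 4 * g ^ 4) + h ^ 2 * (d ^ 2 - 1) + f ^ 2 * g ^ 2) / (2 * g ^ 2))
    (hK : ∀ h : ℝ, K h = d * g * σstar h / (g ^ 2 * σstar h + h ^ 2))
    (hV : ∀ h : ℝ, VoI h = (K h) ^ 2 * σstar h) :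
    Tendsto VoI atTop atTop := by
  have hA : (0:ℝ) < d ^ 2 - 1 := by nlinarith
  have hd0 : (0:ℝ) < d := by linarith
  set A : ℝ := d ^ 2 - 1 with hAdef
  set c : ℝ := A / (d * g) with hcdef
  have hc : 0 < c := div_pos hA (by positivity)
  set C : ℝ := c ^ 2 * (A / g ^ 2) with hCdef
  have hC : 0 < C := by positivity
  have key : ∀ h : ℝ, C * h ^ 2 ≤ VoI h := by
    intro h
    have harg : (h ^ 2 * A) ^ 2 ≤
        h ^ 2 * (h ^ 2 * A ^ 2 + 2 * f ^ 2 * g ^ 2 * (d ^ 2 + 1)) + f ^ 4 * g ^ 4 := by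
      nlinarith [mul_nonneg (sq_nonneg (h*f*g)) (by positivity : (0:ℝ) ≤ d ^ 2 + 1),
        sq_nonneg (f ^ 2 * g ^ 2)]
    have hsq : h ^ 2 * A ≤ Real.sqrt
        (h ^ 2 * (h ^ 2 * A ^ 2 + 2 * f ^ 2 * g ^ 2 * (d ^ 2 + 1)) + f ^ 4 * g ^ 4) := by
      have h0 : 0 ≤ h ^ 2 * A := by positivity
      calc h ^ 2 * A = Real.sqrt ((h ^ 2 * A) ^ 2) := (Real.sqrt_sq h0).symm
        _ ≤ _ := Real.sqrt_le_sqrt harg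
    have hslb : A / g ^ 2 * h ^ 2 ≤ σstar h := by
      rw [hσ h, div_mul_eq_mul_div, div_le_div_iff₀ (by positivity) (by positivity)]
      nlinarith [mul_le_mul_of_nonneg_right hsq (sq_nonneg g), sq_nonneg (f * g * g)]
    have hspos : 0 < σstar h := by
      have : 0 < A / g ^ 2 * h ^ 2 + f ^ 2 * g ^ 2 / (2 * g ^ 2) := by positivity
      rw [hσ h]
      have h0 := Real.sqrt_nonneg
        (h ^ 2 * (h ^ 2 * A ^ 2 + 2 * f ^ 2 * g ^ 2 * (d ^ 2 + 1)) + f ^ 4 * g ^ 4)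
      have hha : 0 ≤ h ^ 2 * A := by positivity
      positivity
    have hDpos : 0 < g ^ 2 * σstar h + h ^ 2 := by positivity
    have hgs : A * h ^ 2 ≤ g ^ 2 * σstar h := by
      have := hslb
      rw [div_mul_eq_mul_div, div_le_iff₀ (by positivity)] at this
      nlinarith
    have hKlb : c ≤ K h := by
      rw [hK h, hcdef, div_le_div_iff₀ (by positivity) hDpos]
      nlinarith [hspos]
    have hK2 : c ^ 2 ≤ (K h) ^ 2 := by nlinarith [hc.le]
    rw [hV h, hCdef]
    calc c ^ 2 * (A / g ^ 2) * h ^ 2 = c ^ 2 * (A / g ^ 2 * h ^ 2) := by ring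
      _ ≤ c ^ 2 * σstar h := by
          exact mul_le_mul_of_nonneg_left hslb (by positivity)
      _ ≤ (K h) ^ 2 * σstar h := mul_le_mul_of_nonneg_right hK2 hspos.le
  have hbase : Tendsto (fun h : ℝ => C * h ^ 2) atTop atTop :=
    (tendsto_pow_atTop (n := 2) (by norm_num)).const_mul_atTop hC
  exact tendsto_atTop_mono key hbase
end

section
/- Let d, f, g be real numbers with 1 < d² < 2, f > 0, g > 0, define σ*(h) = (√(h²(h²(d²−1)² + 2f²g²(d²+1)) + f⁴g⁴) + h²(d²−1) + f²g²)/(2g²), K(h) = d g σ*(h)/(g²σ*(h) + h²), and VoI(h) = K(h)²·σ*(h). Then zero signal noise is a strict local maximum of the Value of Information: VoI(0) = d²f²/g² and there exists δ > 0 such that VoI(h) < d²f²/g² for all h with 0 < h < δ. -/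
/-- For growth rates with `1 < d² < 2`, zero signal noise is a strict local maximum of the
Value of Information: `VoI(0) = d²f²/g²` and `VoI(h) < d²f²/g²` for all small `h > 0`. -/
theorem voi_strict_local_max_at_zero_noise (d f g : ℝ)
    (hd1 : 1 < d ^ 2) (hd2 : d ^ 2 < 2) (hf : 0 < f) (hg : 0 < g)
    (σstar K VoI : ℝ → ℝ)
    (hσ : ∀ h : ℝ, σstar h =
      (Real.sqrt (h ^ 2 * (h ^ 2 * (d ^ 2 - 1) ^ 2 + 2 * f ^ 2 * g ^ 2 * (d ^ 2 + 1))
        + f ^ 4 * g ^ 4) + h ^ 2 * (d ^ 2 - 1) + f ^ 2 * g ^ 2) / (2 * g ^ 2))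
    (hK : ∀ h : ℝ, K h = d * g * σstar h / (g ^ 2 * σstar h + h ^ 2))
    (hV : ∀ h : ℝ, VoI h = (K h) ^ 2 * σstar h) :
    VoI 0 = d ^ 2 * f ^ 2 / g ^ 2 ∧
      ∃ δ : ℝ, 0 < δ ∧ ∀ h : ℝ, 0 < h → h < δ → VoI h < d ^ 2 * f ^ 2 / g ^ 2 := by
  have hg2 : (0:ℝ) < g ^ 2 := by positivity
  have hd1' : (0:ℝ) < d ^ 2 - 1 := by linarith
  have h2d : (0:ℝ) < 2 - d ^ 2 := by linarith
  have hsqrt2d : 0 < Real.sqrt (2 - d ^ 2) := Real.sqrt_pos.mpr h2d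
  have hσ0 : σstar 0 = f ^ 2 := by
    rw [hσ 0, show (0:ℝ) ^ 2 * ((0:ℝ) ^ 2 * (d ^ 2 - 1) ^ 2 + 2 * f ^ 2 * g ^ 2 * (d ^ 2 + 1))
        + f ^ 4 * g ^ 4 = (f ^ 2 * g ^ 2) ^ 2 by ring,
      Real.sqrt_sq (by positivity)]
    field_simp
    ring
  constructor
  · rw [hV 0, hK 0, hσ0]
    have hfne : f ^ 2 ≠ 0 := by positivity
    field_simp
    ring
  · refine ⟨f * g * Real.sqrt (2 - d ^ 2) / (d ^ 2 - 1), by positivity, ?_⟩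
    intro h hh hhδ
    have hs2 : Real.sqrt (2 - d ^ 2) ^ 2 = 2 - d ^ 2 := Real.sq_sqrt (le_of_lt h2d)
    have hbound : (d ^ 2 - 1) ^ 2 * h ^ 2 < f ^ 2 * g ^ 2 * (2 - d ^ 2) := by
      have h1 : h * (d ^ 2 - 1) < f * g * Real.sqrt (2 - d ^ 2) :=
        (lt_div_iff₀ hd1').mp hhδ
      have h1nn : 0 ≤ h * (d ^ 2 - 1) := by positivity
      nlinarith [mul_self_lt_mul_self h1nn h1, hs2]
    set A := (d ^ 2 - 1) * h ^ 2 + f ^ 2 * g ^ 2 with hAdef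
    set D := A ^ 2 + 4 * f ^ 2 * g ^ 2 * h ^ 2 with hDdef
    have hDnn : (0:ℝ) ≤ D := by positivity
    have hsqnn : 0 ≤ Real.sqrt D := Real.sqrt_nonneg _
    have hsq : Real.sqrt D ^ 2 = D := Real.sq_sqrt hDnn
    have hApos : (0:ℝ) < A := by positivity
    set σ := σstar h with hσdef
    have hσval : σ = (Real.sqrt D + A) / (2 * g ^ 2) := by
      rw [hσdef, hσ h,
        show h ^ 2 * (h ^ 2 * (d ^ 2 - 1) ^ 2 + 2 * f ^ 2 * g ^ 2 * (d ^ 2 + 1))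
          + f ^ 4 * g ^ 4 = D by rw [hDdef, hAdef]; ring]
      rw [hAdef]
      ring
    have hσpos : 0 < σ := by rw [hσval]; positivity
    have hdef : 2 * g ^ 2 * σ = Real.sqrt D + A := by
      rw [hσval]; field_simp
    have e1g : g ^ 2 * (g ^ 2 * σ ^ 2) = g ^ 2 * (A * σ + f ^ 2 * h ^ 2) := by
      have hD' : Real.sqrt D ^ 2 = A ^ 2 + 4 * f ^ 2 * g ^ 2 * h ^ 2 := by
        rw [hsq, hDdef]
      linear_combination ((2 * g ^ 2 * σ + Real.sqrt D - A) * hdef + hD') / 4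
    have e1 : g ^ 2 * σ ^ 2 = A * σ + f ^ 2 * h ^ 2 :=
      mul_left_cancel₀ (ne_of_gt hg2) e1g
    rw [hAdef] at e1
    have key : g ^ 4 * σ ^ 3 - f ^ 2 * (g ^ 2 * σ + h ^ 2) ^ 2 =
        σ * h ^ 2 * ((d ^ 2 - 1) ^ 2 * h ^ 2 - f ^ 2 * g ^ 2 * (2 - d ^ 2))
          - f ^ 2 * h ^ 4 * (2 - d ^ 2) := by
      linear_combination (g ^ 2 * σ + (d ^ 2 - 1) * h ^ 2) * e1
    have hσh2 : 0 < σ * h ^ 2 := by positivity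
    have hneg : σ * h ^ 2 * ((d ^ 2 - 1) ^ 2 * h ^ 2 - f ^ 2 * g ^ 2 * (2 - d ^ 2)) < 0 :=
      mul_neg_of_pos_of_neg hσh2 (by linarith)
    have hposterm : 0 < f ^ 2 * h ^ 4 * (2 - d ^ 2) := by positivity
    have hkey : g ^ 4 * σ ^ 3 < f ^ 2 * (g ^ 2 * σ + h ^ 2) ^ 2 := by linarith
    have hden : 0 < g ^ 2 * σ + h ^ 2 := by positivity
    have hd2pos : (0:ℝ) < d ^ 2 := by linarith
    rw [hV h, hK h, ← hσdef, div_pow, div_mul_eq_mul_div,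
      div_lt_div_iff₀ (by positivity) hg2]
    calc (d * g * σ) ^ 2 * σ * g ^ 2 = d ^ 2 * (g ^ 4 * σ ^ 3) := by ring
      _ < d ^ 2 * (f ^ 2 * (g ^ 2 * σ + h ^ 2) ^ 2) := by
          exact mul_lt_mul_of_pos_left hkey hd2pos
      _ = d ^ 2 * f ^ 2 * (g ^ 2 * σ + h ^ 2) ^ 2 := by ring
end

section
/- Let d, f, g be real numbers with 1 < d² < 2, f > 0, g > 0, define σ*(h) = (√(h²(h²(d²−1)² + 2f²g²(d²+1)) + f⁴g⁴) + h²(d²−1) + f²g²)/(2g²), K(h) = d g σ*(h)/(g²σ*(h) + h²), and VoI(h) = K(h)²·σ*(h). Then VoI is non-monotonic in the signal noise: there exist 0 < h₁ < h₂ with VoI(h₁) < VoI(0) < VoI(h₂). -/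
private lemma voi_formula_aux (d f g : ℝ)
    (hd1 : 1 < d ^ 2) (hf : 0 < f) (hg : 0 < g)
    (σstar K VoI : ℝ → ℝ)
    (hσ : ∀ h : ℝ, σstar h =
      (Real.sqrt (h ^ 2 * (h ^ 2 * (d ^ 2 - 1) ^ 2 + 2 * f ^ 2 * g ^ 2 * (d ^ 2 + 1))
        + f ^ 4 * g ^ 4) + h ^ 2 * (d ^ 2 - 1) + f ^ 2 * g ^ 2) / (2 * g ^ 2))
    (hK : ∀ h : ℝ, K h = d * g * σstar h / (g ^ 2 * σstar h + h ^ 2))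
    (hV : ∀ h : ℝ, VoI h = (K h) ^ 2 * σstar h)
    (σ : ℝ) (hσf : f ^ 2 ≤ σ) :
    VoI (Real.sqrt (g ^ 2 * σ * (σ - f ^ 2) / ((d ^ 2 - 1) * σ + f ^ 2)))
      = ((d ^ 2 - 1) * σ + f ^ 2) ^ 2 / (d ^ 2 * g ^ 2 * σ) := by
  have hσ0 : 0 < σ := lt_of_lt_of_le (by positivity) hσf
  have ha : 0 < d ^ 2 - 1 := by linarith
  have hD : 0 < (d ^ 2 - 1) * σ + f ^ 2 := by nlinarith
  set a := d ^ 2 - 1 with ha_def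
  set D := a * σ + f ^ 2 with hD_def
  set x := g ^ 2 * σ * (σ - f ^ 2) / D with hx_def
  have hx0 : 0 ≤ x := by
    apply div_nonneg _ hD.le
    have : 0 ≤ σ - f ^ 2 := by linarith
    positivity
  have hh2 : (Real.sqrt x) ^ 2 = x := Real.sq_sqrt hx0
  have hxD : x * D = g ^ 2 * σ * (σ - f ^ 2) := by
    rw [hx_def, div_mul_cancel₀ _ hD.ne']
  have hsq : x ^ 2 * (d ^ 2 - 1) ^ 2 + 2 * f ^ 2 * g ^ 2 * (d ^ 2 + 1) * x + f ^ 4 * g ^ 4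
      = (2 * g ^ 2 * σ - x * a - f ^ 2 * g ^ 2) ^ 2 := by
    linear_combination (4 * g ^ 2) * hxD
  have h1 : (2 * g ^ 2 * σ - x * a - f ^ 2 * g ^ 2) * D
      = g ^ 2 * (a * σ ^ 2 + 2 * σ * f ^ 2 - f ^ 4) := by
    linear_combination (-a) * hxD
  have h2 : 0 ≤ g ^ 2 * (a * σ ^ 2 + 2 * σ * f ^ 2 - f ^ 4) := by
    have h21 : f ^ 2 * f ^ 2 ≤ σ * f ^ 2 := mul_le_mul_of_nonneg_right hσf (by positivity)
    have h22 : 0 ≤ a * σ ^ 2 := by positivity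
    have : 0 ≤ a * σ ^ 2 + 2 * σ * f ^ 2 - f ^ 4 := by nlinarith
    positivity
  have hnn : 0 ≤ 2 * g ^ 2 * σ - x * a - f ^ 2 * g ^ 2 := by
    have := div_nonneg h2 hD.le
    rwa [← h1, mul_div_cancel_right₀ _ hD.ne'] at this
  have hσval : σstar (Real.sqrt x) = σ := by
    rw [hσ, hh2]
    rw [show x * (x * (d ^ 2 - 1) ^ 2 + 2 * f ^ 2 * g ^ 2 * (d ^ 2 + 1)) + f ^ 4 * g ^ 4
        = (2 * g ^ 2 * σ - x * a - f ^ 2 * g ^ 2) ^ 2 by linear_combination hsq,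
      Real.sqrt_sq hnn]
    field_simp
    ring
  have hrel : (g ^ 2 * σ + x) * D = d ^ 2 * g ^ 2 * σ ^ 2 := by
    linear_combination hxD
  have hden : 0 < g ^ 2 * σ + x := by positivity
  have hd0 : d ≠ 0 := by intro h; rw [h] at hd1; norm_num at hd1
  rw [hV, hK, hσval, hh2]
  rw [div_pow, div_mul_eq_mul_div, div_eq_div_iff (by positivity) (by positivity)]
  linear_combination (-(d ^ 2 * g ^ 2 * σ ^ 2) - D * (g ^ 2 * σ + x)) * hrel

private lemma voi_x_mono (f g a s t : ℝ) (hf : 0 < f) (hg : 0 < g) (ha : 0 < a)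
    (hs : f ^ 2 ≤ s) (hst : s < t) :
    g ^ 2 * s * (s - f ^ 2) / (a * s + f ^ 2) < g ^ 2 * t * (t - f ^ 2) / (a * t + f ^ 2) := by
  have hs0 : 0 < s := lt_of_lt_of_le (by positivity) hs
  have ht0 : 0 < t := hs0.trans hst
  rw [div_lt_div_iff₀ (by positivity) (by positivity)]
  have hkey : 0 < a * s * t + f ^ 2 * (s + t) - f ^ 4 := by
    have : f ^ 2 * f ^ 2 ≤ f ^ 2 * s := by nlinarith
    nlinarith [mul_pos ha (mul_pos hs0 ht0), mul_pos (pow_pos hf 2) ht0]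
  nlinarith [mul_pos (sub_pos.mpr hst) hkey, sq_nonneg g,
    mul_pos (mul_pos (sub_pos.mpr hst) hkey) (pow_pos hg 2)]

private lemma voi_ineq_left (d f g : ℝ) (hd1 : 1 < d ^ 2) (hd2 : d ^ 2 < 2)
    (hf : 0 < f) (hg : 0 < g) :
    ((d ^ 2 - 1) * ((2 - (d ^ 2 - 1) ^ 2) * f ^ 2) + f ^ 2) ^ 2
        / (d ^ 2 * g ^ 2 * ((2 - (d ^ 2 - 1) ^ 2) * f ^ 2))
      < ((d ^ 2 - 1) * f ^ 2 + f ^ 2) ^ 2 / (d ^ 2 * g ^ 2 * f ^ 2) := by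
  have ha : 0 < d ^ 2 - 1 := by linarith
  have ha1 : d ^ 2 - 1 < 1 := by linarith
  have h2 : 0 < 2 - (d ^ 2 - 1) ^ 2 := by nlinarith
  have h1a : 0 < 1 - (d ^ 2 - 1) ^ 2 := by nlinarith
  have hd0 : (0:ℝ) < d ^ 2 := by linarith
  rw [div_lt_div_iff₀ (by positivity) (by positivity)]
  nlinarith [mul_pos (show (0:ℝ) < d ^ 2 * g ^ 2 * f ^ 6 by positivity)
    (mul_pos (mul_pos h1a h1a) h1a)]

private lemma voi_ineq_right (d f g : ℝ) (hd1 : 1 < d ^ 2) (hd2 : d ^ 2 < 2)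
    (hf : 0 < f) (hg : 0 < g) :
    ((d ^ 2 - 1) * f ^ 2 + f ^ 2) ^ 2 / (d ^ 2 * g ^ 2 * f ^ 2)
      < ((d ^ 2 - 1) * (2 * f ^ 2 / (d ^ 2 - 1) ^ 2) + f ^ 2) ^ 2
          / (d ^ 2 * g ^ 2 * (2 * f ^ 2 / (d ^ 2 - 1) ^ 2)) := by
  have ha : 0 < d ^ 2 - 1 := by linarith
  have ha1 : d ^ 2 - 1 < 1 := by linarith
  have h2 : 0 < 2 - (d ^ 2 - 1) ^ 2 := by nlinarith
  have hd0 : (0:ℝ) < d ^ 2 := by linarith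
  rw [div_lt_div_iff₀ (by positivity) (by positivity)]
  have hL : ((d ^ 2 - 1) * f ^ 2 + f ^ 2) ^ 2
        * (d ^ 2 * g ^ 2 * (2 * f ^ 2 / (d ^ 2 - 1) ^ 2))
      = ((d ^ 2 - 1) * f ^ 2 + f ^ 2) ^ 2 * (d ^ 2 * g ^ 2 * 2 * f ^ 2) / (d ^ 2 - 1) ^ 2 := by
    ring
  have hR : ((d ^ 2 - 1) * (2 * f ^ 2 / (d ^ 2 - 1) ^ 2) + f ^ 2) ^ 2
        * (d ^ 2 * g ^ 2 * f ^ 2)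
      = (f ^ 2 * (2 + (d ^ 2 - 1))) ^ 2 * (d ^ 2 * g ^ 2 * f ^ 2) / (d ^ 2 - 1) ^ 2 := by
    field_simp
  rw [hL, hR, div_lt_div_iff₀ (by positivity) (by positivity)]
  nlinarith [mul_pos (show (0:ℝ) < d ^ 2 * g ^ 2 * f ^ 6 * (d ^ 2 - 1) ^ 2 by positivity) h2]

/-- For growth rates with `1 < d² < 2`, the Value of Information is non-monotonic in the
signal noise: there are `0 < h₁ < h₂` with `VoI(h₁) < VoI(0) < VoI(h₂)`. -/
theorem voi_non_monotonic (d f g : ℝ)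
    (hd1 : 1 < d ^ 2) (hd2 : d ^ 2 < 2) (hf : 0 < f) (hg : 0 < g)
    (σstar K VoI : ℝ → ℝ)
    (hσ : ∀ h : ℝ, σstar h =
      (Real.sqrt (h ^ 2 * (h ^ 2 * (d ^ 2 - 1) ^ 2 + 2 * f ^ 2 * g ^ 2 * (d ^ 2 + 1))
        + f ^ 4 * g ^ 4) + h ^ 2 * (d ^ 2 - 1) + f ^ 2 * g ^ 2) / (2 * g ^ 2))
    (hK : ∀ h : ℝ, K h = d * g * σstar h / (g ^ 2 * σstar h + h ^ 2))
    (hV : ∀ h : ℝ, VoI h = (K h) ^ 2 * σstar h) :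
    ∃ h₁ h₂ : ℝ, 0 < h₁ ∧ h₁ < h₂ ∧ VoI h₁ < VoI 0 ∧ VoI 0 < VoI h₂ := by
  have ha : 0 < d ^ 2 - 1 := by linarith
  have ha1 : d ^ 2 - 1 < 1 := by linarith
  have hσ₁f : f ^ 2 < (2 - (d ^ 2 - 1) ^ 2) * f ^ 2 := by
    have h1a : (0:ℝ) < 1 - (d ^ 2 - 1) ^ 2 := by nlinarith
    nlinarith [mul_pos h1a (pow_pos hf 2)]
  have hσ₂0 : (0:ℝ) < 2 * f ^ 2 / (d ^ 2 - 1) ^ 2 := by positivity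
  have hσ₁₂ : (2 - (d ^ 2 - 1) ^ 2) * f ^ 2 < 2 * f ^ 2 / (d ^ 2 - 1) ^ 2 := by
    rw [lt_div_iff₀ (by positivity)]
    nlinarith [mul_pos (pow_pos hf 2) (mul_pos (show (0:ℝ) < 1 - (d^2-1)^2 by nlinarith)
      (show (0:ℝ) < 1 - (d^2-1)^2 by nlinarith))]
  have hx₁0 : 0 < g ^ 2 * ((2 - (d ^ 2 - 1) ^ 2) * f ^ 2)
      * ((2 - (d ^ 2 - 1) ^ 2) * f ^ 2 - f ^ 2)
      / ((d ^ 2 - 1) * ((2 - (d ^ 2 - 1) ^ 2) * f ^ 2) + f ^ 2) := by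
    have h1 : 0 < (2 - (d ^ 2 - 1) ^ 2) * f ^ 2 := lt_trans (by positivity) hσ₁f
    have h2 : 0 < (2 - (d ^ 2 - 1) ^ 2) * f ^ 2 - f ^ 2 := by linarith
    have h3 : 0 < (d ^ 2 - 1) * ((2 - (d ^ 2 - 1) ^ 2) * f ^ 2) + f ^ 2 := by positivity
    positivity
  have hx₁₂ := voi_x_mono f g (d ^ 2 - 1) ((2 - (d ^ 2 - 1) ^ 2) * f ^ 2)
    (2 * f ^ 2 / (d ^ 2 - 1) ^ 2) hf hg ha hσ₁f.le hσ₁₂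
  refine ⟨_, _, Real.sqrt_pos.mpr hx₁0,
    Real.sqrt_lt_sqrt hx₁0.le hx₁₂, ?_, ?_⟩
  · have e1 := voi_formula_aux d f g hd1 hf hg σstar K VoI hσ hK hV
      ((2 - (d ^ 2 - 1) ^ 2) * f ^ 2) hσ₁f.le
    have e0 := voi_formula_aux d f g hd1 hf hg σstar K VoI hσ hK hV (f ^ 2) le_rfl
    have hz : Real.sqrt (g ^ 2 * f ^ 2 * (f ^ 2 - f ^ 2)
        / ((d ^ 2 - 1) * f ^ 2 + f ^ 2)) = 0 := by
      simp
    rw [hz] at e0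
    rw [e1, e0]
    exact voi_ineq_left d f g hd1 hd2 hf hg
  · have e2 := voi_formula_aux d f g hd1 hf hg σstar K VoI hσ hK hV
      (2 * f ^ 2 / (d ^ 2 - 1) ^ 2) (le_of_lt (lt_trans hσ₁f hσ₁₂))
    have e0 := voi_formula_aux d f g hd1 hf hg σstar K VoI hσ hK hV (f ^ 2) le_rfl
    have hz : Real.sqrt (g ^ 2 * f ^ 2 * (f ^ 2 - f ^ 2)
        / ((d ^ 2 - 1) * f ^ 2 + f ^ 2)) = 0 := by
      simp
    rw [hz] at e0
    rw [e2, e0]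
    exact voi_ineq_right d f g hd1 hd2 hf hg
end

section
/- Let b, p, f, d be real numbers with d > 1, b ≠ 0, p ≠ 0, and define, for h ≥ 0, σ*(h) = (1/2)·(√((h² + b²p²)²(d²−1)² + 2f²(h² + b²p²)(d²+1) + f⁴) + (h² + b²p²)(d²−1) + f²). Then lim_{h→∞} 2b²p·σ*(h)/(σ*(h) + 2b²p² + 2h²) = 2b²p(d²−1)/(d²+1). In particular, even as the additive signal noise h grows without bound, the critical term in the Euler equation retains a nonzero dependence on the multiplicative demand noise parameter b. -/
open Filter

/-- As the additive signal noise `h` grows without bound, the critical term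
`2b²pσ*(h)/(σ*(h) + 2b²p² + 2h²)` of the Euler equation converges to
`2b²p(d² − 1)/(d² + 1)`, which still depends on the multiplicative noise parameter `b`. -/
theorem euler_critical_term_limit (b p f d : ℝ)
    (hd : 1 < d) (hb : b ≠ 0) (hp : p ≠ 0)
    (σstar : ℝ → ℝ)
    (hσ : ∀ h : ℝ, 0 ≤ h → σstar h =
      (1 / 2) * (Real.sqrt ((h ^ 2 + b ^ 2 * p ^ 2) ^ 2 * (d ^ 2 - 1) ^ 2
          + 2 * f ^ 2 * (h ^ 2 + b ^ 2 * p ^ 2) * (d ^ 2 + 1) + f ^ 4)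
        + (h ^ 2 + b ^ 2 * p ^ 2) * (d ^ 2 - 1) + f ^ 2)) :
    Tendsto (fun h : ℝ =>
        2 * b ^ 2 * p * σstar h / (σstar h + 2 * b ^ 2 * p ^ 2 + 2 * h ^ 2))
      atTop (nhds (2 * b ^ 2 * p * (d ^ 2 - 1) / (d ^ 2 + 1))) := by
  have hd2 : (0:ℝ) < d ^ 2 - 1 := by nlinarith
  set c : ℝ := b ^ 2 * p ^ 2 with hc
  have hc0 : 0 < c := by positivity
  set S : ℝ → ℝ := fun u => (1 / 2) * (Real.sqrt ((1 + c * u) ^ 2 * (d ^ 2 - 1) ^ 2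
      + 2 * f ^ 2 * u * (1 + c * u) * (d ^ 2 + 1) + f ^ 4 * u ^ 2)
      + (1 + c * u) * (d ^ 2 - 1) + f ^ 2 * u) with hSdef
  have hS0 : S 0 = d ^ 2 - 1 := by
    simp only [hSdef]
    rw [show ((1 + c * 0) ^ 2 * (d ^ 2 - 1) ^ 2
      + 2 * f ^ 2 * 0 * (1 + c * 0) * (d ^ 2 + 1) + f ^ 4 * 0 ^ 2) = (d ^ 2 - 1) ^ 2 by ring,
      Real.sqrt_sq hd2.le]
    ring
  have hScont : ContinuousAt S 0 := by
    apply Continuous.continuousAt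
    simp only [hSdef]
    continuity
  set F : ℝ → ℝ := fun u => 2 * b ^ 2 * p * S u / (S u + 2 * c * u + 2) with hFdef
  have hFcont : ContinuousAt F 0 := by
    apply ContinuousAt.div
    · exact continuousAt_const.mul hScont
    · exact (hScont.add (continuousAt_const.mul continuousAt_id)).add continuousAt_const
    · simp only [hS0, mul_zero, add_zero]
      nlinarith
  have hF0 : F 0 = 2 * b ^ 2 * p * (d ^ 2 - 1) / (d ^ 2 + 1) := by
    simp only [hFdef, hS0, mul_zero, add_zero]
    ring_nf
  clear_value S F
  have htend : Tendsto (fun h : ℝ => (h ^ 2)⁻¹) atTop (nhds 0) := by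
    apply Tendsto.inv_tendsto_atTop
    exact tendsto_pow_atTop (by norm_num)
  have hcomp : Tendsto (fun h : ℝ => F ((h ^ 2)⁻¹)) atTop
      (nhds (2 * b ^ 2 * p * (d ^ 2 - 1) / (d ^ 2 + 1))) := by
    rw [← hF0]
    exact hFcont.tendsto.comp htend
  refine hcomp.congr' ?_
  filter_upwards [eventually_ge_atTop (1 : ℝ)] with h hh
  clear hcomp htend hFcont hScont hF0 hS0
  have hh0 : (0:ℝ) ≤ h := by linarith
  have hh2 : (0:ℝ) < h ^ 2 := by nlinarith
  set u : ℝ := (h ^ 2)⁻¹ with hu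
  have hu0 : 0 < u := by positivity
  have huh : u * h ^ 2 = 1 := inv_mul_cancel₀ hh2.ne'
  clear_value u
  have harg : (h ^ 2 + c) ^ 2 * (d ^ 2 - 1) ^ 2
      + 2 * f ^ 2 * (h ^ 2 + c) * (d ^ 2 + 1) + f ^ 4
      = (h ^ 2) ^ 2 * ((1 + c * u) ^ 2 * (d ^ 2 - 1) ^ 2
      + 2 * f ^ 2 * u * (1 + c * u) * (d ^ 2 + 1) + f ^ 4 * u ^ 2) := by
    linear_combination (-(((d ^ 2 - 1) ^ 2 * (2 * c * h ^ 2 + c ^ 2 * (1 + u * h ^ 2))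
      + 2 * f ^ 2 * (d ^ 2 + 1) * (h ^ 2 + c * (1 + u * h ^ 2))
      + f ^ 4 * (1 + u * h ^ 2)))) * huh
  have hkey : σstar h = h ^ 2 * S u := by
    rw [hσ h hh0]
    simp only [hSdef]
    rw [harg, Real.sqrt_mul (by positivity), Real.sqrt_sq hh2.le]
    have e2 : h ^ 2 * u = 1 := by rw [mul_comm]; exact huh
    linear_combination (-(d ^ 2 - 1) * c / 2 - f ^ 2 / 2) * e2
  have hSpos : 0 < S u := by
    simp only [hSdef]
    have h1 : 0 ≤ Real.sqrt ((1 + c * u) ^ 2 * (d ^ 2 - 1) ^ 2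
      + 2 * f ^ 2 * u * (1 + c * u) * (d ^ 2 + 1) + f ^ 4 * u ^ 2) := Real.sqrt_nonneg _
    have hcu : 0 < c * u := mul_pos hc0 hu0
    have h2 : 0 < (1 + c * u) * (d ^ 2 - 1) := mul_pos (by linarith) hd2
    have h3 : 0 ≤ f ^ 2 * u := by positivity
    linarith
  simp only [hFdef]
  rw [hkey]
  have t1 : 0 < h ^ 2 * S u := mul_pos hh2 hSpos
  have t2 : 0 < c * u := mul_pos hc0 hu0
  have hc' : (0:ℝ) < b ^ 2 * p ^ 2 := by positivity
  have hden1 : (0:ℝ) < h ^ 2 * S u + 2 * b ^ 2 * p ^ 2 + 2 * h ^ 2 := by linarith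
  have hden2 : (0:ℝ) < S u + 2 * c * u + 2 := by linarith
  rw [div_eq_div_iff hden2.ne' hden1.ne']
  linear_combination (-(4 * b ^ 4 * p ^ 3 * S u)) * huh
end
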